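/- The number of unimodal n-cycles (transitive unimodal permutations of {1,...,n}) equals (1/n) · Σ_{d | n, d odd} μ(d) · 2^(n/d - 1), where μ is the Möbius function. -/

import Mathlib

/-- `δ` is unimodal with peak `m`: strictly increasing on `{0,...,m}` and
strictly decreasing on `{m,...,n-1}`. -/
def IsUnimodalPeak {n : ℕ} (δ : Equiv.Perm (Fin n)) (m : Fin n) : Prop :=
  (∀ a b : Fin n, a < b → b ≤ m → δ a < δ b) ∧
  (∀ a b : Fin n, m ≤ a → a < b → δ b < δ a)

/-- A permutation of `Fin n` is unimodal if it has a peak. -/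
def IsUnimodal {n : ℕ} (δ : Equiv.Perm (Fin n)) : Prop :=
  ∃ m, IsUnimodalPeak δ m

/-- A permutation is transitive (a single `n`-cycle) if every point can be
mapped to every other point by iteration. -/
def IsTransitive {n : ℕ} (δ : Equiv.Perm (Fin n)) : Prop :=
  ∀ x y : Fin n, ∃ i : ℕ, (δ ^ i) x = y

/-- The unique increasing map `Ω_J` from `Fin k` onto the subset `J` of size `k`. -/
def omegaMap {n k : ℕ} (J : Finset (Fin n)) (h : J.card = k) : Fin k → Fin n :=
  fun a => (J.orderIsoOfFin h a : Fin n)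

open scoped Classical
open Fin.NatCast

namespace TU

/-! ### Sequences -/

def shf (i : ℕ) (s : ℕ → Bool) : ℕ → Bool := fun k => s (k + i)

def par (s : ℕ → Bool) : ℕ → Bool
  | 0 => false
  | k + 1 => xor (par s k) (s k)

def Per (s : ℕ → Bool) (p : ℕ) : Prop := ∀ k, s (k + p) = s k

@[simp] lemma shf_zero (s : ℕ → Bool) : shf 0 s = s := rfl

lemma shf_shf (i j : ℕ) (s : ℕ → Bool) : shf i (shf j s) = shf (i + j) s := by
  funext k; simp [shf, Nat.add_assoc, Nat.add_comm j i]

lemma shf_apply (i : ℕ) (s : ℕ → Bool) (k : ℕ) : shf i s k = s (k + i) := rfl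

lemma par_succ (s : ℕ → Bool) (k : ℕ) : par s (k + 1) = xor (par s k) (s k) := rfl

lemma par_add (s : ℕ → Bool) (a b : ℕ) :
    par s (a + b) = xor (par s a) (par (shf a s) b) := by
  induction b with
  | zero => simp [par]
  | succ b ih =>
      show par s (a + b + 1) = _
      rw [par_succ, ih, par_succ]
      cases par s a <;> cases par (shf a s) b <;> simp [shf, Nat.add_comm]

lemma per_shf {s : ℕ → Bool} {p : ℕ} (h : Per s p) (a : ℕ) : Per (shf a s) p := by
  intro k
  show s (k + p + a) = s (k + a)
  rw [show k + p + a = (k + a) + p from by ring]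
  exact h (k + a)

lemma per_mul {s : ℕ → Bool} {p : ℕ} (h : Per s p) (j k : ℕ) : s (k + j * p) = s k := by
  induction j with
  | zero => simp
  | succ j ih =>
      rw [show k + (j + 1) * p = (k + j * p) + p from by ring, h _, ih]

lemma per_mod {s : ℕ → Bool} {p : ℕ} (h : Per s p) (k : ℕ) : s k = s (k % p) := by
  conv_lhs => rw [← Nat.mod_add_div' k p]
  exact per_mul h _ _

lemma window {s : ℕ → Bool} {p : ℕ} (h : Per s p) (a : ℕ) :
    par (shf a s) p = par s p := by
  induction a with
  | zero => simp
  | succ a ih =>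
      rw [← ih]
      set t := shf a s with ht
      have hpt : Per t p := per_shf h a
      have h1 : shf (a + 1) s = shf 1 t := by rw [ht, shf_shf, Nat.add_comm]
      rw [h1]
      have e1 : par t (p + 1) = xor (par t p) (t p) := par_succ t p
      have e2 : par t (1 + p) = xor (par t 1) (par (shf 1 t) p) := par_add t 1 p
      have e3 : t p = t 0 := by have := hpt 0; simpa using this
      have e4 : par t 1 = t 0 := by simp [par]
      rw [Nat.add_comm 1 p] at e2
      rw [e1, e3, e4] at e2
      cases h0 : t 0 <;> rw [h0] at e2 <;> simp at e2 <;> simp [e2]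

lemma par_antiper {s : ℕ → Bool} {p : ℕ} (h : Per s p) (hpar : par s p = true) (k : ℕ) :
    par s (k + p) = ! par s k := by
  rw [par_add, window h, hpar]
  cases par s k <;> simp

lemma par_mul {s : ℕ → Bool} {q : ℕ} (h : Per s q) (c : ℕ) :
    par s (c * q) = (decide (c % 2 = 1) && par s q) := by
  induction c with
  | zero => simp [par]
  | succ c ih =>
      rw [show (c + 1) * q = c * q + q from by ring, par_add, window h, ih]
      rcases Nat.even_or_odd c with hc | hc
      · have h1 : c % 2 = 0 := Nat.even_iff.mp hc
        have h2 : (c + 1) % 2 = 1 := by omega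
        simp [h1, h2]
      · have h1 : c % 2 = 1 := Nat.odd_iff.mp hc
        have h2 : (c + 1) % 2 = 0 := by omega
        simp [h1, h2]

/-! ### The lexicographic key -/

def key (s : ℕ → Bool) : Lex (ℕ → Bool) := toLex (fun k => par s (k + 1))

lemma ofLex_key (s : ℕ → Bool) (k : ℕ) : ofLex (key s) k = par s (k + 1) := rfl

lemma lex_lt_iff {a b : Lex (ℕ → Bool)} :
    a < b ↔ ∃ i, (∀ j < i, ofLex a j = ofLex b j) ∧ ofLex a i < ofLex b i := Iff.rfl

lemma key_inj {s t : ℕ → Bool} (h : key s = key t) : s = t := by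
  have hpar : ∀ k, par s k = par t k := by
    intro k
    cases k with
    | zero => rfl
    | succ k => exact congrFun (congrArg ofLex h) k
  funext k
  have h1 := hpar (k + 1)
  have h2 := hpar k
  rw [par_succ, par_succ, h2] at h1
  cases par t k <;> simp at h1 <;> simp [h1]

lemma key_head (s : ℕ → Bool) : ofLex (key s) 0 = s 0 := by
  show par s (0 + 1) = s 0
  simp [par]

lemma key_lt_of_head (s t : ℕ → Bool) (hs : s 0 = false) (ht : t 0 = true) :
    key s < key t := by
  rw [lex_lt_iff]
  refine ⟨0, fun j hj => absurd hj (by omega), ?_⟩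
  rw [key_head, key_head, hs, ht]
  exact Bool.false_lt_true

lemma head_le_of_key_lt {s t : ℕ → Bool} (h : key s < key t) :
    s 0 = true → t 0 = true := by
  intro hs
  by_contra ht
  simp at ht
  exact absurd (key_lt_of_head t s ht hs) (lt_asymm h)

lemma ofLex_key_shf_false {s : ℕ → Bool} (hs : s 0 = false) (k : ℕ) :
    ofLex (key s) (k + 1) = ofLex (key (shf 1 s)) k := by
  show par s (k + 2) = par (shf 1 s) (k + 1)
  rw [show (k + 2) = 1 + (k + 1) from by ring, par_add]
  simp [par, hs]

lemma ofLex_key_shf_true {s : ℕ → Bool} (hs : s 0 = true) (k : ℕ) :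
    ofLex (key s) (k + 1) = ! ofLex (key (shf 1 s)) k := by
  show par s (k + 2) = ! par (shf 1 s) (k + 1)
  rw [show (k + 2) = 1 + (k + 1) from by ring, par_add]
  simp [par, hs]

lemma key_shf_lt_of_false {s t : ℕ → Bool} (hs : s 0 = false) (ht : t 0 = false)
    (h : key s < key t) : key (shf 1 s) < key (shf 1 t) := by
  rw [lex_lt_iff] at h ⊢
  obtain ⟨i, hpre, hlt⟩ := h
  rw [Bool.lt_iff] at hlt
  obtain ⟨h1, h2⟩ := hlt
  cases i with
  | zero =>
      rw [key_head, ht] at h2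
      exact absurd h2 (by simp)
  | succ i =>
      refine ⟨i, fun j hj => ?_, ?_⟩
      · have := hpre (j + 1) (by omega)
        rwa [ofLex_key_shf_false hs, ofLex_key_shf_false ht] at this
      · rw [← ofLex_key_shf_false hs, ← ofLex_key_shf_false ht, Bool.lt_iff]
        exact ⟨h1, h2⟩

lemma key_shf_lt_of_true {s t : ℕ → Bool} (hs : s 0 = true) (ht : t 0 = true)
    (h : key s < key t) : key (shf 1 t) < key (shf 1 s) := by
  rw [lex_lt_iff] at h ⊢
  obtain ⟨i, hpre, hlt⟩ := h
  rw [Bool.lt_iff] at hlt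
  obtain ⟨h1, h2⟩ := hlt
  cases i with
  | zero =>
      rw [key_head, hs] at h1
      exact absurd h1 (by simp)
  | succ i =>
      refine ⟨i, fun j hj => ?_, ?_⟩
      · have := hpre (j + 1) (by omega)
        rw [ofLex_key_shf_true hs, ofLex_key_shf_true ht] at this
        cases h3 : ofLex (key (shf 1 t)) j <;> cases h4 : ofLex (key (shf 1 s)) j <;>
          rw [h3, h4] at this <;> simp_all
      · rw [ofLex_key_shf_true hs] at h1
        rw [ofLex_key_shf_true ht] at h2
        rw [Bool.lt_iff]
        constructor
        · cases h3 : ofLex (key (shf 1 t)) i <;> rw [h3] at h2 <;> simp_all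
        · cases h4 : ofLex (key (shf 1 s)) i <;> rw [h4] at h1 <;> simp_all


/-! ### iff versions of order lemmas -/

lemma key_shf_lt_iff_of_false {s t : ℕ → Bool} (hst : s ≠ t)
    (hs : s 0 = false) (ht : t 0 = false) :
    key (shf 1 s) < key (shf 1 t) ↔ key s < key t := by
  constructor
  · intro h
    rcases lt_trichotomy (key s) (key t) with h' | h' | h'
    · exact h'
    · exact absurd (key_inj h') hst
    · exact absurd h (lt_asymm (key_shf_lt_of_false ht hs h'))
  · exact key_shf_lt_of_false hs ht

lemma key_shf_lt_iff_of_true {s t : ℕ → Bool} (hst : s ≠ t)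
    (hs : s 0 = true) (ht : t 0 = true) :
    key (shf 1 t) < key (shf 1 s) ↔ key s < key t := by
  constructor
  · intro h
    rcases lt_trichotomy (key s) (key t) with h' | h' | h'
    · exact h'
    · exact absurd (key_inj h') hst
    · exact absurd h (lt_asymm (key_shf_lt_of_true ht hs h'))
  · exact key_shf_lt_of_true hs ht

/-! ### Words of length n -/

section Words

variable (n : ℕ) [NeZero n]

/-- Infinite periodization of a word of length `n`. -/
def iw (w : Fin n → Bool) : ℕ → Bool := fun k => w (k : Fin n)

variable {n}

lemma iw_apply (w : Fin n → Bool) (k : ℕ) : iw n w k = w (k : Fin n) := rfl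

lemma iw_per (w : Fin n → Bool) : Per (iw n w) n := by
  intro k
  show w _ = w _
  congr 1
  rw [Fin.ext_iff, Fin.val_natCast, Fin.val_natCast]
  exact Nat.add_mod_right k n

lemma iw_fin (w : Fin n → Bool) (i : Fin n) : iw n w i.val = w i := by
  rw [iw_apply]
  congr 1
  rw [Fin.ext_iff, Fin.val_natCast]
  exact Nat.mod_eq_of_lt i.isLt

variable (n)

/-- Parity (weight mod 2) of a word. -/
def pw (w : Fin n → Bool) : Bool := par (iw n w) n

/-- Aperiodicity: no period `p` with `0 < p < n`. -/
def Ap (w : Fin n → Bool) : Prop := ∀ p, 0 < p → p < n → ¬ Per (iw n w) p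

variable {n}

lemma par_congr {s t : ℕ → Bool} (c : ℕ) (h : ∀ j < c, s j = t j) :
    par s c = par t c := by
  induction c with
  | zero => rfl
  | succ c ih =>
      rw [par_succ, par_succ, ih (fun j hj => h j (by omega)), h c (by omega)]

/-- Difference propagation: two sequences agreeing except at `i0`. -/
lemma par_diff {s t : ℕ → Bool} {i0 : ℕ} (h : ∀ j, j ≠ i0 → s j = t j) (c : ℕ) :
    par s c = if i0 < c then xor (par t c) (xor (s i0) (t i0)) else par t c := by
  induction c with
  | zero => simp [par]
  | succ c ih =>
      rw [par_succ, par_succ, ih]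
      by_cases hc : i0 < c
      · have hc' : i0 < c + 1 := by omega
        have : s c = t c := h c (by omega)
        simp only [hc, hc', if_true, this]
        cases par t c <;> cases s i0 <;> cases t i0 <;> cases t c <;> rfl
      · by_cases he : i0 = c
        · subst he
          simp only [hc, if_false, if_pos (Nat.lt_succ_self i0)]
          cases par t i0 <;> cases s i0 <;> cases t i0 <;> rfl
        · have h2 : ¬ i0 < c + 1 := by omega
          simp only [hc, if_false, h2]
          rw [h c (fun hh => he hh.symm)]

/-- Changing one letter changes the parity by the xor of old and new letters. -/
lemma pw_diff {w w' : Fin n → Bool} (i0 : Fin n)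
    (h : ∀ j : Fin n, j ≠ i0 → w j = w' j) :
    pw n w = xor (pw n w') (xor (w i0) (w' i0)) := by
  set s := iw n w with hs
  set t : ℕ → Bool := fun j => if j = i0.val then iw n w' j else iw n w j with htdef
  have hB : ∀ j, j ≠ i0.val → s j = t j := by
    intro j hj
    simp only [htdef, if_neg hj, hs]
  have hA : ∀ j < n, t j = iw n w' j := by
    intro j hj
    by_cases hji : j = i0.val
    · simp [htdef, hji]
    · simp only [htdef, if_neg hji, iw_apply]
      have : (j : Fin n) ≠ i0 := by
        rw [Ne, Fin.ext_iff, Fin.val_natCast, Nat.mod_eq_of_lt hj]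
        exact fun hh => hji hh
      exact h _ this
  have h1 : par s n = xor (par t n) (xor (s i0.val) (t i0.val)) := by
    rw [par_diff hB n, if_pos i0.isLt]
  have h2 : par t n = pw n w' := par_congr n hA
  have h3 : s i0.val = w i0 := iw_fin w i0
  have h4 : t i0.val = w' i0 := by simp only [htdef, if_pos rfl]; exact iw_fin w' i0
  show par s n = _
  rw [h1, h2, h3, h4]

/-- Words with equal parity agreeing off one index are equal. -/
lemma eq_of_pw_eq {w w' : Fin n → Bool} {i0 : Fin n}
    (h : ∀ j : Fin n, j ≠ i0 → w j = w' j) (hp : pw n w = pw n w') : w = w' := by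
  have hd := pw_diff i0 h
  rw [hp] at hd
  have hx : w i0 = w' i0 := by
    cases hA : pw n w' <;> cases hB : w i0 <;> cases hC : w' i0 <;>
      rw [hA, hB, hC] at hd <;> first | rfl | exact absurd hd (by decide)
  funext j
  by_cases hj : j = i0
  · subst hj; exact hx
  · exact h j hj

end Words

/-! ### Stage 3: the permutation built from a word -/

section Psi

variable {n : ℕ} [NeZero n]

/-- Rotation keys. -/
noncomputable def kap (w : Fin n → Bool) (i : ℕ) : Lex (ℕ → Bool) := key (shf i (iw n w))

/-- The finset of rotation keys. -/
noncomputable def RS (w : Fin n → Bool) : Finset (Lex (ℕ → Bool)) :=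
  Finset.univ.image (fun i : Fin n => kap w i.val)

variable {w : Fin n → Bool}

lemma shf_n (w : Fin n → Bool) : shf n (iw n w) = iw n w := by
  funext k; exact iw_per w k

lemma shf_mod (w : Fin n → Bool) (i : ℕ) : shf i (iw n w) = shf (i % n) (iw n w) := by
  funext k
  show iw n w (k + i) = iw n w (k + i % n)
  rw [per_mod (iw_per w) (k + i), per_mod (iw_per w) (k + i % n), Nat.add_mod, Nat.add_mod k (i % n),
    Nat.mod_mod_of_dvd _ dvd_rfl]

lemma kap_mod (w : Fin n → Bool) (i : ℕ) : kap w i = kap w (i % n) := by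
  unfold kap; rw [shf_mod w i]

lemma good_rot (hpw : pw n w = true) (i : ℕ) : par (shf i (iw n w)) n = true := by
  rw [window (iw_per w)]; exact hpw

lemma rot_inj (hap : Ap n w) : ∀ i j : Fin n, shf i.val (iw n w) = shf j.val (iw n w) → i = j := by
  have main : ∀ i j : Fin n, i < j → shf i.val (iw n w) = shf j.val (iw n w) → False := by
    intro i j hij heq
    set s := iw n w with hs
    set d := j.val - i.val with hd
    have hd0 : 0 < d := by omega
    have hdn : d < n := by have := j.isLt; omega
    have hstep' : ∀ k, s (k + i.val) = s (k + j.val) := by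
      intro k; have := congrFun heq k; exact this
    have hper : Per s d := by
      intro k
      have h1 : s (k + n + d) = s (k + n) := by
        have h2 := hstep' (k + n - i.val)
        have e1 : k + n - i.val + i.val = k + n := by have := i.isLt; omega
        have e2 : k + n - i.val + j.val = k + n + d := by have := i.isLt; omega
        rw [e1, e2] at h2
        exact h2.symm
      have h3 : s (k + n + d) = s (k + d + n) := by ring_nf
      have h4 := iw_per w (k + d)
      have h5 := iw_per w k
      rw [h3] at h1
      rw [← hs] at h4 h5
      rw [h4, h5] at h1
      exact h1
    exact hap d hd0 hdn hper
  intro i j heq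
  rcases lt_trichotomy i j with h | h | h
  · exact absurd heq (fun hh => main i j h hh)
  · exact h
  · exact absurd heq.symm (fun hh => main j i h hh)

lemma kap_inj (hap : Ap n w) : ∀ i j : Fin n, kap w i.val = kap w j.val → i = j :=
  fun i j h => rot_inj hap i j (key_inj h)

lemma rs_card (hap : Ap n w) : (RS w).card = n := by
  rw [RS, Finset.card_image_of_injOn (fun i _ j _ h => kap_inj hap i j h), Finset.card_univ,
    Fintype.card_fin]

lemma kap_mem (w : Fin n → Bool) (i : Fin n) : kap w i.val ∈ RS w :=
  Finset.mem_image_of_mem _ (Finset.mem_univ i)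

/-- The order isomorphism from ranks to rotation keys. -/
noncomputable def eiso (hap : Ap n w) : Fin n ≃o ↥(RS w) := (RS w).orderIsoOfFin (rs_card hap)

/-- `rho i` is the rank of the `i`-th rotation. -/
noncomputable def rho (hap : Ap n w) : Fin n ≃ Fin n :=
  Equiv.ofBijective (fun i => (eiso hap).symm ⟨kap w i.val, kap_mem w i⟩) (by
    have hinj : Function.Injective (fun i : Fin n => (eiso hap).symm ⟨kap w i.val, kap_mem w i⟩) := by
      intro i j h
      simp only at h
      have := congrArg (fun z => ((eiso hap) z : Lex (ℕ → Bool))) h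
      simp only [OrderIso.apply_symm_apply] at this
      exact kap_inj hap i j this
    exact (Fintype.bijective_iff_injective_and_card _).2 ⟨hinj, rfl⟩)

lemma eiso_rho (hap : Ap n w) (i : Fin n) :
    ((eiso hap (rho hap i)) : Lex (ℕ → Bool)) = kap w i.val := by
  simp [rho, Equiv.ofBijective]

lemma rho_lt_iff (hap : Ap n w) (i j : Fin n) :
    rho hap i < rho hap j ↔ kap w i.val < kap w j.val := by
  rw [← OrderIso.lt_iff_lt (eiso hap), ← Subtype.coe_lt_coe, eiso_rho, eiso_rho]
  exact Iff.rfl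

/-- The permutation associated to a word. -/
noncomputable def dlt (hap : Ap n w) : Equiv.Perm (Fin n) :=
  (rho hap).symm.trans ((Equiv.addRight (1 : Fin n)).trans (rho hap))

lemma dlt_apply (hap : Ap n w) (a : Fin n) : dlt hap a = rho hap ((rho hap).symm a + 1) := rfl

lemma dlt_rho (hap : Ap n w) (i : Fin n) : dlt hap (rho hap i) = rho hap (i + 1) := by
  rw [dlt_apply, Equiv.symm_apply_apply]

lemma dlt_pow (hap : Ap n w) (k : ℕ) (a : Fin n) :
    (dlt hap ^ k) a = rho hap ((rho hap).symm a + (k : Fin n)) := by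
  induction k generalizing a with
  | zero => simp
  | succ k ih =>
      rw [pow_succ', Equiv.Perm.mul_apply, ih a, dlt_rho]
      congr 1
      rw [Nat.cast_add, Nat.cast_one]
      open Fin.CommRing in ring

lemma dlt_trans (hap : Ap n w) : IsTransitive (dlt hap) := by
  intro x y
  refine ⟨(((rho hap).symm y - (rho hap).symm x : Fin n)).val, ?_⟩
  rw [dlt_pow, Fin.cast_val_eq_self]
  have : (rho hap).symm x + ((rho hap).symm y - (rho hap).symm x) = (rho hap).symm y := by
    open Fin.CommRing in ring
  rw [this, Equiv.apply_symm_apply]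


/-! ### Unimodality of `dlt` -/

lemma head_rot (w : Fin n → Bool) (i : Fin n) : shf i.val (iw n w) 0 = w i := by
  show iw n w (0 + i.val) = w i
  rw [Nat.zero_add, iw_fin]

lemma fin_add_one_val (a : Fin n) : ((a + 1 : Fin n)).val % n = (a.val + 1) % n := by
  have h : ((a + ((1 : ℕ) : Fin n)).val) % n = (a.val + 1) % n := by
    rw [Fin.add_def, Fin.val_natCast, Nat.mod_mod_of_dvd _ dvd_rfl, Nat.add_mod,
      Nat.mod_mod_of_dvd _ dvd_rfl, ← Nat.add_mod]
  rwa [Nat.cast_one] at h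

lemma kap_succ (w : Fin n → Bool) (a : Fin n) :
    kap w ((a + 1 : Fin n)).val = key (shf 1 (shf a.val (iw n w))) := by
  rw [shf_shf, Nat.add_comm]
  rw [kap_mod w ((a + 1 : Fin n)).val, fin_add_one_val, ← kap_mod w (a.val + 1)]
  rfl

lemma step_iff_false (hap : Ap n w) (i j : Fin n) (hij : i ≠ j)
    (hi : w i = false) (hj : w j = false) :
    rho hap (i + 1) < rho hap (j + 1) ↔ rho hap i < rho hap j := by
  rw [rho_lt_iff, rho_lt_iff, kap_succ, kap_succ]
  have hne : shf i.val (iw n w) ≠ shf j.val (iw n w) := fun hh => hij (rot_inj hap i j hh)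
  have h1 : shf i.val (iw n w) 0 = false := by rw [head_rot]; exact hi
  have h2 : shf j.val (iw n w) 0 = false := by rw [head_rot]; exact hj
  exact key_shf_lt_iff_of_false hne h1 h2

lemma step_iff_true (hap : Ap n w) (i j : Fin n) (hij : i ≠ j)
    (hi : w i = true) (hj : w j = true) :
    rho hap (j + 1) < rho hap (i + 1) ↔ rho hap i < rho hap j := by
  rw [rho_lt_iff, rho_lt_iff, kap_succ, kap_succ]
  have hne : shf i.val (iw n w) ≠ shf j.val (iw n w) := fun hh => hij (rot_inj hap i j hh)
  have h1 : shf i.val (iw n w) 0 = true := by rw [head_rot]; exact hi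
  have h2 : shf j.val (iw n w) 0 = true := by rw [head_rot]; exact hj
  exact key_shf_lt_iff_of_true hne h1 h2

lemma rank_lt_of_heads (hap : Ap n w) (i j : Fin n)
    (hi : w i = false) (hj : w j = true) : rho hap i < rho hap j := by
  rw [rho_lt_iff]
  exact key_lt_of_head _ _ (by rw [head_rot]; exact hi) (by rw [head_rot]; exact hj)

/-- The largest element of `Fin n`. -/
def Mtop : Fin n := ⟨n - 1, by have := Nat.pos_of_ne_zero (NeZero.ne n); omega⟩

lemma le_Mtop (a : Fin n) : a ≤ (Mtop : Fin n) := by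
  have := a.isLt
  show a.val ≤ n - 1
  omega

lemma dlt_peak (hap : Ap n w) : dlt hap ((dlt hap).symm Mtop) = Mtop :=
  Equiv.apply_symm_apply _ _

lemma rho_peak_time (hap : Ap n w) :
    rho hap ((rho hap).symm ((dlt hap).symm Mtop) + 1) = Mtop := by
  have := dlt_apply hap ((dlt hap).symm Mtop)
  rw [dlt_peak hap] at this
  exact this.symm

lemma letter_of_gt_peak (hap : Ap n w) (i : Fin n)
    (hgt : (dlt hap).symm Mtop < rho hap i) : w i = true := by
  by_contra hi
  simp only [Bool.not_eq_true] at hi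
  set pk := (dlt hap).symm Mtop with hpk
  set im := (rho hap).symm pk with him
  have hrim : rho hap im = pk := Equiv.apply_symm_apply _ _
  have hine : im ≠ i := by
    intro hh
    rw [← hh, hrim] at hgt
    exact lt_irrefl _ hgt
  cases hwim : w im with
  | false =>
      have := (step_iff_false hap im i hine hwim hi).2 (by rw [hrim]; exact hgt)
      have h2 : rho hap (im + 1) = Mtop := rho_peak_time hap
      rw [h2] at this
      exact absurd this (not_lt.2 (le_Mtop _))
  | true =>
      have := rank_lt_of_heads hap i im hi hwim
      rw [hrim] at this
      exact absurd hgt (lt_asymm this)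

lemma letter_of_lt_peak (hap : Ap n w) (i : Fin n)
    (hlt : rho hap i < (dlt hap).symm Mtop) : w i = false := by
  by_contra hi
  simp only [Bool.not_eq_false] at hi
  set pk := (dlt hap).symm Mtop with hpk
  set im := (rho hap).symm pk with him
  have hrim : rho hap im = pk := Equiv.apply_symm_apply _ _
  have hine : i ≠ im := by
    intro hh
    rw [hh, hrim] at hlt
    exact lt_irrefl _ hlt
  cases hwim : w im with
  | true =>
      have := (step_iff_true hap i im hine hi hwim).2 (by rw [hrim]; exact hlt)
      have h2 : rho hap (im + 1) = Mtop := rho_peak_time hap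
      rw [h2] at this
      exact absurd this (not_lt.2 (le_Mtop _))
  | false =>
      have := rank_lt_of_heads hap im i hwim hi
      rw [hrim] at this
      exact absurd hlt (lt_asymm this)

lemma dlt_unimodal_peak (hap : Ap n w) :
    IsUnimodalPeak (dlt hap) ((dlt hap).symm Mtop) := by
  set pk := (dlt hap).symm Mtop with hpk
  constructor
  · intro a b hab hbm
    rcases eq_or_lt_of_le hbm with hbe | hblt
    · rw [hbe, dlt_peak hap]
      refine lt_of_le_of_ne (le_Mtop _) (fun hh => ?_)
      have : a = pk := by
        apply (dlt hap).injective
        rw [hh, dlt_peak hap]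
      rw [this, ← hbe] at hab
      exact lt_irrefl _ hab
    · set i := (rho hap).symm a with hi
      set j := (rho hap).symm b with hj
      have hra : rho hap i = a := Equiv.apply_symm_apply _ _
      have hrb : rho hap j = b := Equiv.apply_symm_apply _ _
      have hwi : w i = false := letter_of_lt_peak hap i (by rw [hra]; exact lt_trans hab hblt)
      have hwj : w j = false := letter_of_lt_peak hap j (by rw [hrb]; exact hblt)
      have hij : i ≠ j := fun hh => (by rw [hh, hrb] at hra; exact (lt_irrefl a (hra ▸ hab)) : False)
      have hstep := (step_iff_false hap i j hij hwi hwj).2 (by rw [hra, hrb]; exact hab)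
      have e1 : dlt hap a = rho hap (i + 1) := by rw [← hra, dlt_rho]
      have e2 : dlt hap b = rho hap (j + 1) := by rw [← hrb, dlt_rho]
      rw [e1, e2]
      exact hstep
  · intro a b ham hab
    rcases eq_or_lt_of_le ham with hae | halt
    · rw [← hae, dlt_peak hap]
      refine lt_of_le_of_ne (le_Mtop _) (fun hh => ?_)
      have : b = pk := by
        apply (dlt hap).injective
        rw [hh, dlt_peak hap]
      rw [this, ← hae] at hab
      exact lt_irrefl _ hab
    · set i := (rho hap).symm a with hi
      set j := (rho hap).symm b with hj
      have hra : rho hap i = a := Equiv.apply_symm_apply _ _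
      have hrb : rho hap j = b := Equiv.apply_symm_apply _ _
      have hwi : w i = true := letter_of_gt_peak hap i (by rw [hra]; exact halt)
      have hwj : w j = true := letter_of_gt_peak hap j (by rw [hrb]; exact lt_trans halt hab)
      have hij : i ≠ j := fun hh => (by rw [hh, hrb] at hra; exact (lt_irrefl a (hra ▸ hab)) : False)
      have hstep := (step_iff_true hap i j hij hwi hwj).2 (by rw [hra, hrb]; exact hab)
      have e1 : dlt hap a = rho hap (i + 1) := by rw [← hra, dlt_rho]
      have e2 : dlt hap b = rho hap (j + 1) := by rw [← hrb, dlt_rho]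
      rw [e1, e2]
      exact hstep


/-! ### Orbit lemmas for transitive permutations -/

lemma orbit_add (δ : Equiv.Perm (Fin n)) (x : Fin n) {t : ℕ} (h : (δ ^ t) x = x) (i j : ℕ) :
    (δ ^ (i + j * t)) x = (δ ^ i) x := by
  induction j with
  | zero => simp
  | succ j ih =>
      rw [show i + (j + 1) * t = (i + j * t) + t from by ring, pow_add, Equiv.Perm.mul_apply, h, ih]

lemma fixed_ge (δ : Equiv.Perm (Fin n)) (hδ : IsTransitive δ) (x : Fin n) (t : ℕ)
    (ht : 0 < t) (hfix : (δ ^ t) x = x) : n ≤ t := by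
  have hsurj : Function.Surjective (fun i : Fin t => (δ ^ i.val) x) := by
    intro y
    obtain ⟨i, hi⟩ := hδ x y
    refine ⟨⟨i % t, Nat.mod_lt _ ht⟩, ?_⟩
    show (δ ^ (i % t)) x = y
    rw [← hi]
    conv_rhs => rw [← Nat.mod_add_div' i t]
    exact (orbit_add δ x hfix (i % t) (i / t)).symm
  have := Fintype.card_le_of_surjective _ hsurj
  simpa using this

lemma orbit_inj (δ : Equiv.Perm (Fin n)) (hδ : IsTransitive δ) (x : Fin n) :
    ∀ i j, i < n → j < n → (δ ^ i) x = (δ ^ j) x → i = j := by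
  have main : ∀ i j, i < j → j < n → (δ ^ i) x = (δ ^ j) x → False := by
    intro i j hij hjn heq
    have h1 : (δ ^ (j - i)) ((δ ^ i) x) = (δ ^ i) x := by
      rw [← Equiv.Perm.mul_apply, ← pow_add, show j - i + i = j from by omega, heq]
    have := fixed_ge δ hδ ((δ ^ i) x) (j - i) (by omega) h1
    omega
  intro i j hin hjn heq
  rcases lt_trichotomy i j with h | h | h
  · exact absurd heq (fun hh => main i j h hjn hh)
  · exact h
  · exact absurd heq.symm (fun hh => main j i h hin hh)

lemma pow_n_fix (δ : Equiv.Perm (Fin n)) (hδ : IsTransitive δ) (x : Fin n) :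
    (δ ^ n) x = x := by
  have hn : 0 < n := Nat.pos_of_ne_zero (NeZero.ne n)
  have hinj : Function.Injective (fun i : Fin n => (δ ^ i.val) x) := by
    intro i j h
    exact Fin.ext (orbit_inj δ hδ x i.val j.val i.isLt j.isLt h)
  have hsurj : Function.Surjective (fun i : Fin n => (δ ^ i.val) x) :=
    Finite.surjective_of_injective hinj
  obtain ⟨k, hk⟩ := hsurj ((δ ^ n) x)
  have hk2 : (δ ^ k.val) x = (δ ^ n) x := hk
  by_cases hk0 : k.val = 0
  · rw [hk0, pow_zero] at hk2
    exact hk2.symm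
  · exfalso
    have h1 : (δ ^ (n - k.val)) ((δ ^ k.val) x) = (δ ^ k.val) x := by
      rw [← Equiv.Perm.mul_apply, ← pow_add, show n - k.val + k.val = n from by omega]
      exact hk2.symm
    have := fixed_ge δ hδ ((δ ^ k.val) x) (n - k.val) (by have := k.isLt; omega) h1
    have := k.isLt
    omega

lemma pow_mod_orbit (δ : Equiv.Perm (Fin n)) (hδ : IsTransitive δ) (x : Fin n) (i : ℕ) :
    (δ ^ i) x = (δ ^ (i % n)) x := by
  conv_lhs => rw [← Nat.mod_add_div' i n]
  exact orbit_add δ x (pow_n_fix δ hδ x) (i % n) (i / n)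

/-! ### Injectivity -/

lemma rho_eq_orbit (hap : Ap n w) (i : Fin n) :
    rho hap i = ((dlt hap) ^ (i.val)) (rho hap 0) := by
  rw [dlt_pow, Equiv.symm_apply_apply, Fin.cast_val_eq_self, zero_add]

lemma psi_inj {w w' : Fin n → Bool} (hpw : pw n w = true) (hap : Ap n w)
    (hpw' : pw n w' = true) (hap' : Ap n w')
    (hd : dlt hap = dlt hap') (hx : rho hap 0 = rho hap' 0) : w = w' := by
  have hrho : ∀ i : Fin n, rho hap i = rho hap' i := by
    intro i
    rw [rho_eq_orbit hap, rho_eq_orbit hap', hd, hx]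
  set pk := (dlt hap).symm Mtop with hpk
  have hpk' : (dlt hap').symm Mtop = pk := by rw [← hd]
  set i0 := (rho hap).symm pk with hi0
  have hlet : ∀ j : Fin n, j ≠ i0 → w j = w' j := by
    intro j hj
    have hne : rho hap j ≠ pk := by
      intro hh
      apply hj
      rw [hi0, ← hh, Equiv.symm_apply_apply]
    rcases lt_or_gt_of_ne hne with h | h
    · rw [letter_of_lt_peak hap j h, letter_of_lt_peak hap' j (by rw [← hrho, hpk']; exact h)]
    · rw [letter_of_gt_peak hap j h, letter_of_gt_peak hap' j (by rw [← hrho, hpk']; exact h)]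
  exact eq_of_pw_eq hlet (by rw [hpw, hpw'])


/-! ### Surjectivity -/

lemma uni_iff_le {δ : Equiv.Perm (Fin n)} {m : Fin n} (hum : IsUnimodalPeak δ m)
    {a b : Fin n} (hab : a ≠ b) (ha : a ≤ m) (hb : b ≤ m) : δ a < δ b ↔ a < b := by
  constructor
  · intro h
    rcases lt_trichotomy a b with h' | h' | h'
    · exact h'
    · exact absurd h' hab
    · exact absurd (hum.1 b a h' ha) (lt_asymm h)
  · intro h
    exact hum.1 a b h hb

lemma uni_iff_ge {δ : Equiv.Perm (Fin n)} {m : Fin n} (hum : IsUnimodalPeak δ m)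
    {a b : Fin n} (hab : a ≠ b) (ha : m ≤ a) (hb : m ≤ b) : δ b < δ a ↔ a < b := by
  constructor
  · intro h
    rcases lt_trichotomy a b with h' | h' | h'
    · exact h'
    · exact absurd h' hab
    · exact absurd (hum.2 b a hb h') (lt_asymm h)
  · intro h
    exact hum.2 a b ha h

theorem psi_surj (δ : Equiv.Perm (Fin n)) (hu : IsUnimodal δ) (hδ : IsTransitive δ)
    (x : Fin n) :
    ∃ (w : Fin n → Bool) (hpw : pw n w = true) (hap : Ap n w),
      dlt hap = δ ∧ rho hap 0 = x := by
  classical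
  obtain ⟨m, hum⟩ := hu
  have hn : 0 < n := Nat.pos_of_ne_zero (NeZero.ne n)
  set o : ℕ → Fin n := fun i => (δ ^ i) x with ho
  have ho_succ : ∀ i, o (i + 1) = δ (o i) := by
    intro i
    show (δ ^ (i + 1)) x = δ ((δ ^ i) x)
    rw [pow_succ', Equiv.Perm.mul_apply]
  have ho_mod : ∀ i, o i = o (i % n) := fun i => pow_mod_orbit δ hδ x i
  have ho_inj : ∀ i j, i < n → j < n → o i = o j → i = j := fun i j hi hj h =>
    orbit_inj δ hδ x i j hi hj h
  have ho_ne : ∀ i j : ℕ, i % n ≠ j % n → o i ≠ o j := by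
    intro i j hmod heq
    rw [ho_mod i, ho_mod j] at heq
    exact hmod (ho_inj _ _ (Nat.mod_lt _ hn) (Nat.mod_lt _ hn) heq)
  -- index of the peak in the orbit
  have hsurj : Function.Surjective (fun i : Fin n => o i.val) := by
    have hinj : Function.Injective (fun i : Fin n => o i.val) := by
      intro i j h
      exact Fin.ext (ho_inj _ _ i.isLt j.isLt h)
    exact Finite.surjective_of_injective hinj
  obtain ⟨i0, hi0⟩ := hsurj m
  have hi0' : o i0.val = m := hi0
  -- the word
  set w0 : Fin n → Bool := fun i => decide (m < o i.val) with hw0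
  set w : Fin n → Bool := if pw n w0 = true then w0 else Function.update w0 i0 true with hw
  have hw_off : ∀ j : Fin n, j ≠ i0 → w j = w0 j := by
    intro j hj
    rw [hw]
    by_cases h : pw n w0 = true
    · rw [if_pos h]
    · rw [if_neg h, Function.update_of_ne hj]
  have hw0_i0 : w0 i0 = false := by
    show decide (m < o i0.val) = false
    rw [hi0']
    simp
  have hpw : pw n w = true := by
    by_cases h : pw n w0 = true
    · have : w = w0 := by rw [hw, if_pos h]
      rw [this]; exact h
    · have hwi0 : w i0 = true := by
        rw [hw, if_neg h, Function.update_self]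
      have hd := pw_diff (w := w) (w' := w0) i0 hw_off
      rw [hwi0, hw0_i0] at hd
      have h0 : pw n w0 = false := by
        cases hh : pw n w0
        · rfl
        · exact absurd hh h
      rw [h0] at hd
      simpa using hd
  -- labels vs peak
  have hlab_le : ∀ i : ℕ, iw n w i = false → o i ≤ m := by
    intro i hl
    rw [iw_apply] at hl
    have hval : ((i : Fin n)).val = i % n := Fin.val_natCast i n
    by_cases hj : (i : Fin n) = i0
    · rw [ho_mod, ← hval, hj, hi0']
    · rw [hw_off _ hj, hw0] at hl
      simp only [decide_eq_false_iff_not, not_lt] at hl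
      rw [ho_mod, ← hval]
      exact hl
  have hlab_ge : ∀ i : ℕ, iw n w i = true → m ≤ o i := by
    intro i hl
    rw [iw_apply] at hl
    have hval : ((i : Fin n)).val = i % n := Fin.val_natCast i n
    by_cases hj : (i : Fin n) = i0
    · rw [ho_mod, ← hval, hj, hi0']
    · rw [hw_off _ hj, hw0] at hl
      simp only [decide_eq_true_eq] at hl
      rw [ho_mod, ← hval]
      exact le_of_lt hl
  -- step lemmas
  have hstep_ff : ∀ i j : ℕ, o i ≠ o j → iw n w i = false → iw n w j = false →
      (o (i + 1) < o (j + 1) ↔ o i < o j) := by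
    intro i j hne hi hj
    rw [ho_succ, ho_succ]
    exact uni_iff_le hum hne (hlab_le i hi) (hlab_le j hj)
  have hstep_tt : ∀ i j : ℕ, o i ≠ o j → iw n w i = true → iw n w j = true →
      (o (j + 1) < o (i + 1) ↔ o i < o j) := by
    intro i j hne hi hj
    rw [ho_succ, ho_succ]
    exact uni_iff_ge hum hne (hlab_ge i hi) (hlab_ge j hj)
  have hstep_ft : ∀ i j : ℕ, o i ≠ o j → iw n w i = false → iw n w j = true →
      o i < o j := by
    intro i j hne hi hj
    exact lt_of_le_of_ne (le_trans (hlab_le i hi) (hlab_ge j hj)) hne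
  -- pairwise distinctness along a would-be period
  have hmodne : ∀ i p : ℕ, 0 < p → p < n → (i + p) % n ≠ i % n := by
    intro i p hp0 hpn heq
    have h2 : Nat.ModEq n (i + p) (i + 0) := by
      show (i + p) % n = (i + 0) % n
      rw [Nat.add_zero]
      exact heq
    have h3 : Nat.ModEq n p 0 := Nat.ModEq.add_left_cancel' i h2
    have h4 : p % n = 0 := by
      have : p % n = 0 % n := h3
      rwa [Nat.zero_mod] at this
    rw [Nat.mod_eq_of_lt hpn] at h4
    omega
  -- aperiodicity
  have hap : Ap n w := by
    intro p hp0 hpn hper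
    have hwin : par (iw n w) n = true := hpw
    have hpairne : ∀ k : ℕ, o k ≠ o (k + p) := by
      intro k
      exact fun hh => ho_ne (k + p) k (hmodne k p hp0 hpn) hh.symm
    have horient : ∀ k : ℕ,
        decide (o k < o (k + p)) = xor (decide (o 0 < o p)) (par (iw n w) k) := by
      intro k
      induction k with
      | zero => simp [par]
      | succ k ih =>
          have hlet : iw n w (k + p) = iw n w k := hper k
          rw [show k + 1 + p = k + p + 1 from by ring]
          cases hl : iw n w k with
          | false =>
              have hiff := hstep_ff k (k + p) (hpairne k) hl (by rw [hlet]; exact hl)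
              rw [decide_eq_decide.2 hiff, ih, par_succ, hl]
              cases decide (o 0 < o p) <;> cases par (iw n w) k <;> rfl
          | true =>
              have hiff := hstep_tt k (k + p) (hpairne k) hl (by rw [hlet]; exact hl)
              have hne1 : o (k + 1) ≠ o (k + p + 1) := by
                have := hpairne (k + 1)
                rwa [show k + 1 + p = k + p + 1 from by ring] at this
              have hthis : decide (o (k + 1) < o (k + p + 1)) =
                  ! decide (o (k + p + 1) < o (k + 1)) := by
                rcases lt_trichotomy (o (k + 1)) (o (k + p + 1)) with h | h | h
                · simp [h, lt_asymm h]
                · exact absurd h hne1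
                · simp [h, lt_asymm h]
              rw [hthis, decide_eq_decide.2 hiff, ih, par_succ, hl]
              cases decide (o 0 < o p) <;> cases par (iw n w) k <;> rfl
    have hfin := horient n
    have he1 : o n = o 0 := by
      show (δ ^ n) x = (δ ^ 0) x
      rw [pow_zero, pow_n_fix δ hδ x]
      rfl
    have he2 : o (n + p) = o p := by
      show (δ ^ (n + p)) x = (δ ^ p) x
      rw [Nat.add_comm, pow_add, Equiv.Perm.mul_apply, pow_n_fix δ hδ x]
    rw [he1, he2, hwin] at hfin
    cases hd : decide (o 0 < o p) <;> rw [hd] at hfin <;> simp at hfin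
  -- order faithfulness
  have hrotne : ∀ i j : ℕ, o i ≠ o j → shf i (iw n w) ≠ shf j (iw n w) := by
    intro i j hne heq
    apply hne
    rw [shf_mod w i, shf_mod w j] at heq
    have := rot_inj hap ⟨i % n, Nat.mod_lt _ hn⟩ ⟨j % n, Nat.mod_lt _ hn⟩ heq
    have hmm : i % n = j % n := congrArg Fin.val this
    rw [ho_mod i, ho_mod j, hmm]
  have hfaith : ∀ K : ℕ, ∀ i j : ℕ,
      (∀ k < K, iw n w (i + k) = iw n w (j + k)) → iw n w (i + K) ≠ iw n w (j + K) →
      o i ≠ o j → (kap w i < kap w j ↔ o i < o j) := by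
    intro K
    induction K with
    | zero =>
        intro i j _ hdiff hne
        rw [Nat.add_zero, Nat.add_zero] at hdiff
        have hhead : ∀ a : ℕ, shf a (iw n w) 0 = iw n w a := by
          intro a
          show iw n w (0 + a) = iw n w a
          rw [Nat.zero_add]
        cases hi : iw n w i with
        | false =>
            have hj : iw n w j = true := by
              cases hj' : iw n w j
              · rw [hi, hj'] at hdiff; exact absurd rfl hdiff
              · rfl
            constructor
            · intro _; exact hstep_ft i j hne hi hj
            · intro _
              exact key_lt_of_head _ _ (by rw [hhead]; exact hi) (by rw [hhead]; exact hj)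
        | true =>
            have hj : iw n w j = false := by
              cases hj' : iw n w j
              · rfl
              · rw [hi, hj'] at hdiff; exact absurd rfl hdiff
            have h1 : o j < o i := hstep_ft j i (Ne.symm hne) hj hi
            have h2 : kap w j < kap w i :=
              key_lt_of_head _ _ (by rw [hhead]; exact hj) (by rw [hhead]; exact hi)
            exact iff_of_false (not_lt.2 (le_of_lt h2)) (not_lt.2 (le_of_lt h1))
    | succ K ih =>
        intro i j hpre hdiff hne
        have hl0 : iw n w i = iw n w j := by
          have := hpre 0 (by omega)
          rwa [Nat.add_zero, Nat.add_zero] at this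
        have hne1 : o (i + 1) ≠ o (j + 1) := by
          intro hh
          have h1 : (i + 1) % n = (j + 1) % n := by
            by_contra hcon
            exact ho_ne _ _ hcon hh
          have h2 : i % n = j % n := by
            have hmodeq : Nat.ModEq n (i + 1) (j + 1) := h1
            exact Nat.ModEq.add_right_cancel' 1 hmodeq
          -- same residues: all letters equal, contradicting hdiff
          apply hdiff
          show iw n w (i + (K + 1)) = iw n w (j + (K + 1))
          rw [iw_apply, iw_apply]
          congr 1
          rw [Fin.ext_iff, Fin.val_natCast, Fin.val_natCast, Nat.add_mod, h2, ← Nat.add_mod]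
        have hpre1 : ∀ k < K, iw n w ((i + 1) + k) = iw n w ((j + 1) + k) := by
          intro k hk
          have := hpre (k + 1) (by omega)
          rw [show i + (k + 1) = (i + 1) + k from by ring,
              show j + (k + 1) = (j + 1) + k from by ring] at this
          exact this
        have hdiff1 : iw n w ((i + 1) + K) ≠ iw n w ((j + 1) + K) := by
          rw [show (i + 1) + K = i + (K + 1) from by ring,
              show (j + 1) + K = j + (K + 1) from by ring]
          exact hdiff
        have hIH := ih (i + 1) (j + 1) hpre1 hdiff1 hne1
        have hkapsh : ∀ a : ℕ, kap w (a + 1) = key (shf 1 (shf a (iw n w))) := by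
          intro a
          rw [shf_shf, Nat.add_comm 1 a]
          rfl
        have hrne : shf i (iw n w) ≠ shf j (iw n w) := hrotne i j hne
        have hhead : ∀ a : ℕ, shf a (iw n w) 0 = iw n w a := by
          intro a
          show iw n w (0 + a) = iw n w a
          rw [Nat.zero_add]
        cases hl : iw n w i with
        | false =>
            have hlj : iw n w j = false := by rw [← hl0]; exact hl
            have hkap : kap w (i + 1) < kap w (j + 1) ↔ kap w i < kap w j := by
              rw [hkapsh, hkapsh]
              exact key_shf_lt_iff_of_false hrne (by rw [hhead]; exact hl)
                (by rw [hhead]; exact hlj)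
            rw [← hkap, hIH]
            exact hstep_ff i j hne hl hlj
        | true =>
            have hlj : iw n w j = true := by rw [← hl0]; exact hl
            have hkap : kap w (j + 1) < kap w (i + 1) ↔ kap w i < kap w j := by
              rw [hkapsh, hkapsh]
              exact key_shf_lt_iff_of_true hrne (by rw [hhead]; exact hl)
                (by rw [hhead]; exact hlj)
            have hiff2 : o (j + 1) < o (i + 1) ↔ o i < o j := hstep_tt i j hne hl hlj
            have hpre1' : ∀ k < K, iw n w ((j + 1) + k) = iw n w ((i + 1) + k) :=
              fun k hk => (hpre1 k hk).symm
            have hdiff1' : iw n w ((j + 1) + K) ≠ iw n w ((i + 1) + K) :=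
              fun hh => hdiff1 hh.symm
            have hIH' := ih (j + 1) (i + 1) hpre1' hdiff1' (Ne.symm hne1)
            rw [← hkap, hIH']
            exact hiff2
  have hcomp : ∀ i j : ℕ, o i ≠ o j → (kap w i < kap w j ↔ o i < o j) := by
    intro i j hne
    have hrne : shf i (iw n w) ≠ shf j (iw n w) := hrotne i j hne
    have hex : ∃ k, iw n w (i + k) ≠ iw n w (j + k) := by
      by_contra hcon
      push_neg at hcon
      apply hrne
      funext k
      show iw n w (k + i) = iw n w (k + j)
      rw [Nat.add_comm k i, Nat.add_comm k j]
      exact hcon k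
    have hdiff := Nat.find_spec hex
    have hpre : ∀ k < Nat.find hex, iw n w (i + k) = iw n w (j + k) := by
      intro k hk
      exact not_ne_iff.1 (Nat.find_min hex hk)
    exact hfaith (Nat.find hex) i j hpre hdiff hne
  have hoinjF : Function.Injective (fun i : Fin n => o i.val) := by
    intro i j h
    exact Fin.ext (ho_inj _ _ i.isLt j.isLt h)
  have hobij : Function.Bijective (fun i : Fin n => o i.val) :=
    (Fintype.bijective_iff_injective_and_card _).2 ⟨hoinjF, rfl⟩
  set F2 : Fin n ≃ Fin n := Equiv.ofBijective _ hobij with hF2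
  have hF2app : ∀ i : Fin n, F2 i = o i.val := fun i => rfl
  have hG : StrictMono (fun a => rho hap (F2.symm a)) := by
    intro a b hab
    have ha : o (F2.symm a).val = a := by
      rw [← hF2app (F2.symm a), Equiv.apply_symm_apply]
    have hb : o (F2.symm b).val = b := by
      rw [← hF2app (F2.symm b), Equiv.apply_symm_apply]
    have hne : o (F2.symm a).val ≠ o (F2.symm b).val := by
      rw [ha, hb]; exact ne_of_lt hab
    show rho hap (F2.symm a) < rho hap (F2.symm b)
    rw [rho_lt_iff hap]
    rw [hcomp _ _ hne, ha, hb]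
    exact hab
  have hGid : (fun a => rho hap (F2.symm a)) = id := by
    apply (StrictMono.range_inj hG strictMono_id).1
    rw [Set.range_id]
    exact Set.range_eq_univ.2 (F2.symm.trans (rho hap)).surjective
  have hRF : ∀ i : Fin n, rho hap i = F2 i := by
    intro i
    have := congrFun hGid (F2 i)
    simp only [id_eq] at this
    rw [Equiv.symm_apply_apply] at this
    exact this
  refine ⟨w, hpw, hap, ?_, ?_⟩
  · apply Equiv.Perm.ext
    intro a
    set i := (rho hap).symm a with hidef
    have hra : rho hap i = a := Equiv.apply_symm_apply _ _
    have e1 : dlt hap a = rho hap (i + 1) := dlt_apply hap a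
    have e2 : rho hap (i + 1) = o ((i + 1 : Fin n)).val := by rw [hRF]; rfl
    have e3 : o ((i + 1 : Fin n)).val = o (i.val + 1) := by
      rw [ho_mod ((i + 1 : Fin n)).val, fin_add_one_val i, ← ho_mod (i.val + 1)]
    have e4 : o (i.val + 1) = δ (o i.val) := ho_succ i.val
    have e5 : o i.val = rho hap i := by rw [hRF]; rfl
    rw [e1, e2, e3, e4, e5, hra]
  · rw [hRF 0]
    have hz : ((0 : Fin n)).val = 0 := rfl
    show o ((0 : Fin n)).val = x
    rw [hz]
    show (δ ^ 0) x = x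
    rw [pow_zero]
    rfl


/-- Part A: the marked unimodal cycles are in bijection with good words. -/
theorem partA (n : ℕ) [NeZero n] :
    Nat.card {w : Fin n → Bool // pw n w = true ∧ Ap n w} =
      ({δ : Equiv.Perm (Fin n) | IsUnimodal δ ∧ IsTransitive δ}.ncard) * n := by
  classical
  set S := {δ : Equiv.Perm (Fin n) | IsUnimodal δ ∧ IsTransitive δ} with hS
  have hmem : ∀ (w : Fin n → Bool) (h : pw n w = true ∧ Ap n w), dlt h.2 ∈ S := by
    intro w h
    exact ⟨⟨_, dlt_unimodal_peak h.2⟩, dlt_trans h.2⟩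
  set Φ : {w : Fin n → Bool // pw n w = true ∧ Ap n w} → (↥S × Fin n) :=
    fun p => (⟨dlt p.2.2, hmem p.1 p.2⟩, rho p.2.2 0) with hPhi
  have hinj : Function.Injective Φ := by
    rintro ⟨w, hw⟩ ⟨w', hw'⟩ h
    have h1 : dlt hw.2 = dlt hw'.2 := by
      have := congrArg Prod.fst h
      exact Subtype.ext_iff.1 this
    have h2 : rho hw.2 0 = rho hw'.2 0 := congrArg Prod.snd h
    exact Subtype.ext (psi_inj hw.1 hw.2 hw'.1 hw'.2 h1 h2)
  have hsurjPhi : Function.Surjective Φ := by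
    rintro ⟨⟨δ, hδu, hδt⟩, xx⟩
    obtain ⟨w, hpw, hap, hd, hx⟩ := psi_surj δ hδu hδt xx
    refine ⟨⟨w, hpw, hap⟩, ?_⟩
    rw [hPhi]
    apply Prod.ext
    · exact Subtype.ext hd
    · exact hx
  have e := Equiv.ofBijective Φ ⟨hinj, hsurjPhi⟩
  rw [Nat.card_congr e, Nat.card_prod, Nat.card_coe_set_eq, Nat.card_eq_fintype_card,
    Fintype.card_fin]

end Psi

/-! ### Part B : counting good words -/

section PartB

lemma per_mod_per {s : ℕ → Bool} {a b : ℕ} (ha : Per s a) (hb : Per s b) : Per s (b % a) := by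
  intro k
  have h1 : s (k + b % a + b / a * a) = s (k + b % a) :=
    per_mul ha (b / a) (k + b % a)
  have h2 : k + b % a + b / a * a = k + b := by
    have := Nat.mod_add_div' b a
    omega
  rw [h2] at h1
  rw [← h1, hb]

lemma per_gcd (s : ℕ → Bool) : ∀ a b : ℕ, Per s a → Per s b → Per s (Nat.gcd a b) := by
  intro a b
  induction a, b using Nat.gcd.induction with
  | H0 b => intro _ hb; rwa [Nat.gcd_zero_left]
  | H1 a b ha ih =>
      intro hpa hpb
      rw [Nat.gcd_rec]
      exact ih (per_mod_per hpa hpb) hpa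

/-- The minimal period of a word. -/
noncomputable def minper (m : ℕ) [NeZero m] (w : Fin m → Bool) : ℕ :=
  Nat.find (p := fun p => 0 < p ∧ Per (iw m w) p)
    ⟨m, Nat.pos_of_ne_zero (NeZero.ne m), iw_per w⟩

variable {m : ℕ} [NeZero m]

lemma minper_spec (w : Fin m → Bool) : 0 < minper m w ∧ Per (iw m w) (minper m w) :=
  Nat.find_spec (p := fun p => 0 < p ∧ Per (iw m w) p)
    ⟨m, Nat.pos_of_ne_zero (NeZero.ne m), iw_per w⟩

lemma minper_pos (w : Fin m → Bool) : 0 < minper m w := (minper_spec w).1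

lemma minper_per (w : Fin m → Bool) : Per (iw m w) (minper m w) := (minper_spec w).2

lemma minper_min (w : Fin m → Bool) {p : ℕ} (hp : 0 < p) (hpl : p < minper m w) :
    ¬ Per (iw m w) p := by
  intro hper
  exact Nat.find_min (p := fun p => 0 < p ∧ Per (iw m w) p)
    ⟨m, Nat.pos_of_ne_zero (NeZero.ne m), iw_per w⟩ hpl ⟨hp, hper⟩

lemma minper_le (w : Fin m → Bool) : minper m w ≤ m :=
  Nat.find_le ⟨Nat.pos_of_ne_zero (NeZero.ne m), iw_per w⟩

lemma minper_dvd (w : Fin m → Bool) : minper m w ∣ m := by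
  set q := minper m w with hq
  set g := Nat.gcd q m with hg
  have hgper : Per (iw m w) g := per_gcd _ q m (minper_per w) (iw_per w)
  have hg0 : 0 < g := Nat.gcd_pos_of_pos_right _ (Nat.pos_of_ne_zero (NeZero.ne m))
  have hgle : g ≤ q := Nat.le_of_dvd (minper_pos w) (Nat.gcd_dvd_left _ _)
  have : g = q := by
    rcases lt_or_eq_of_le hgle with h | h
    · exact absurd hgper (minper_min w hg0 h)
    · exact h
  rw [← this]
  exact Nat.gcd_dvd_right _ _

/-- The primitive block of a word. -/
def blockW (q : ℕ) (w : Fin m → Bool) : Fin q → Bool := fun i => iw m w i.val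

lemma iw_block {q : ℕ} [NeZero q] (w : Fin m → Bool) (hper : Per (iw m w) q) :
    iw q (blockW q w) = iw m w := by
  funext k
  show blockW q w (k : Fin q) = iw m w k
  show iw m w ((k : Fin q)).val = iw m w k
  rw [Fin.val_natCast, ← per_mod hper k]

/-- Periodization of a block to length `m`. -/
def periW (q : ℕ) [NeZero q] (b : Fin q → Bool) : Fin m → Bool := fun i => iw q b i.val

lemma iw_periW {q : ℕ} [NeZero q] (hdvd : q ∣ m) (b : Fin q → Bool) :
    iw m (periW q b) = iw q b := by
  funext k
  show periW q b (k : Fin m) = iw q b k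
  show iw q b ((k : Fin m)).val = iw q b k
  rw [Fin.val_natCast]
  rw [per_mod (iw_per b) k, per_mod (iw_per b) (k % m), Nat.mod_mod_of_dvd _ hdvd]

lemma pw_factor {q : ℕ} [NeZero q] (w : Fin m → Bool) (hper : Per (iw m w) q)
    (hdvd : q ∣ m) :
    pw m w = (decide ((m / q) % 2 = 1) && pw q (blockW q w)) := by
  have h1 : pw m w = par (iw m w) ((m / q) * q) := by
    rw [Nat.div_mul_cancel hdvd]
    rfl
  rw [h1, par_mul hper]
  congr 1
  show par (iw m w) q = pw q (blockW q w)
  rw [pw, iw_block w hper]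


lemma minper_periW {q : ℕ} [NeZero q] (hdvd : q ∣ m) (b : Fin q → Bool) (hab : Ap q b) :
    minper m (periW q b) = q := by
  have hper : Per (iw m (periW (m := m) q b)) q := by
    rw [iw_periW hdvd]
    exact iw_per b
  have hq0 : 0 < q := Nat.pos_of_ne_zero (NeZero.ne q)
  have h1 : minper m (periW q b) ≤ q := Nat.find_le ⟨hq0, hper⟩
  rcases lt_or_eq_of_le h1 with h | h
  · exfalso
    have h2 := minper_per (periW (m := m) q b)
    rw [iw_periW hdvd] at h2
    exact hab _ (minper_pos _) h h2
  · exact h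

/-- Number of good (odd aperiodic) words of length `q`. -/
noncomputable def Acard (q : ℕ) : ℕ :=
  if h : q = 0 then 0 else
    haveI : NeZero q := ⟨h⟩
    (Finset.univ.filter (fun w : Fin q → Bool => pw q w = true ∧ Ap q w)).card

lemma Acard_eq (q : ℕ) [NeZero q] :
    Acard q = (Finset.univ.filter (fun w : Fin q → Bool => pw q w = true ∧ Ap q w)).card := by
  rw [Acard, dif_neg (NeZero.ne q)]

/-- The count of odd-weight words of length `m` is `2 ^ (m - 1)`. -/
lemma card_odd_words : (Finset.univ.filter (fun w : Fin m → Bool => pw m w = true)).card =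
    2 ^ (m - 1) := by
  have hm : 0 < m := Nat.pos_of_ne_zero (NeZero.ne m)
  set L : Fin m := ⟨m - 1, by omega⟩ with hL
  set F : (Fin m → Bool) → (Fin m → Bool) := fun w => Function.update w L (! w L) with hF
  have hFpw : ∀ w, pw m (F w) = ! pw m w := by
    intro w
    have hoff : ∀ j : Fin m, j ≠ L → F w j = w j := by
      intro j hj
      rw [hF]
      exact Function.update_of_ne hj _ _
    have := pw_diff (w := F w) (w' := w) L hoff
    have hFL : F w L = ! w L := by rw [hF]; exact Function.update_self _ _ _
    rw [this, hFL]
    cases pw m w <;> cases w L <;> rfl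
  have hFF : ∀ w, F (F w) = w := by
    intro w
    funext j
    by_cases hj : j = L
    · subst hj
      rw [hF]
      simp only [Function.update_self]
      exact Bool.not_not _
    · rw [hF]
      simp only []
      rw [Function.update_of_ne hj, Function.update_of_ne hj]
  have hcards : (Finset.univ.filter (fun w : Fin m → Bool => pw m w = true)).card =
      (Finset.univ.filter (fun w : Fin m → Bool => ¬ (pw m w = true))).card := by
    apply Finset.card_nbij' F F
    · intro w hw
      rw [Finset.mem_coe, Finset.mem_filter] at hw ⊢
      refine ⟨Finset.mem_univ _, ?_⟩
      rw [hFpw, hw.2]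
      simp
    · intro w hw
      rw [Finset.mem_coe, Finset.mem_filter] at hw ⊢
      refine ⟨Finset.mem_univ _, ?_⟩
      have := hw.2
      rw [hFpw]
      cases hc : pw m w
      · rfl
      · exact absurd hc this
    · intro w _; exact hFF w
    · intro w _; exact hFF w
  have hsplit := Finset.card_filter_add_card_filter_not
    (s := (Finset.univ : Finset (Fin m → Bool))) (p := fun w => pw m w = true)
  have htot : (Finset.univ : Finset (Fin m → Bool)).card = 2 ^ m := by
    rw [Finset.card_univ]
    rw [Fintype.card_fun]
    simp
  rw [htot, ← hcards] at hsplit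
  have h2 : 2 ^ m = 2 * 2 ^ (m - 1) := by
    rw [← pow_succ']
    congr 1
    omega
  omega

/-- Partition of odd words by minimal period. -/
theorem partB_sum :
    2 ^ (m - 1) = ∑ q ∈ m.divisors.filter (fun q => Odd (m / q)), Acard q := by
  have hm : 0 < m := Nat.pos_of_ne_zero (NeZero.ne m)
  rw [← card_odd_words (m := m)]
  rw [Finset.card_eq_sum_card_fiberwise
    (f := fun w : Fin m → Bool => minper m w)
    (t := m.divisors.filter (fun q => Odd (m / q)))]
  · apply Finset.sum_congr rfl
    intro q hq
    rw [Finset.mem_filter, Nat.mem_divisors] at hq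
    obtain ⟨⟨hdvd, _⟩, hodd⟩ := hq
    have hq0 : q ≠ 0 := by
      rintro rfl
      rw [Nat.zero_dvd] at hdvd
      omega
    haveI : NeZero q := ⟨hq0⟩
    rw [Acard_eq]
    apply Finset.card_nbij' (fun w => blockW q w) (fun b => periW q b)
    · intro w hw
      rw [Finset.mem_coe, Finset.mem_filter] at hw
      obtain ⟨hw1, hw2⟩ := Finset.mem_filter.1 hw.1
      have hmq : minper m w = q := hw.2
      have hper : Per (iw m w) q := hmq ▸ minper_per w
      rw [Finset.mem_coe, Finset.mem_filter]
      refine ⟨Finset.mem_univ _, ?_, ?_⟩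
      · have := pw_factor w hper hdvd
        rw [hw2] at this
        cases hc : pw q (blockW q w)
        · rw [hc] at this; simp at this
        · rfl
      · intro p hp0 hpq hperp
        have : Per (iw m w) p := by
          rw [← iw_block w hper]
          exact hperp
        exact minper_min w hp0 (hmq ▸ hpq) this
    · intro b hb
      rw [Finset.mem_coe, Finset.mem_filter] at hb
      obtain ⟨_, hb1, hb2⟩ := hb
      rw [Finset.mem_coe, Finset.mem_filter]
      have hperi : Per (iw m (periW (m := m) q b)) q := by
        rw [iw_periW hdvd]; exact iw_per b
      refine ⟨Finset.mem_filter.2 ⟨Finset.mem_univ _, ?_⟩, minper_periW hdvd b hb2⟩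
      have hpf := pw_factor (periW (m := m) q b) hperi hdvd
      have hblk : blockW q (periW (m := m) q b) = b := by
        funext i
        show iw m (periW (m := m) q b) i.val = b i
        rw [iw_periW hdvd]
        exact iw_fin b i
      rw [hblk, hb1] at hpf
      rw [hpf]
      have : (m / q) % 2 = 1 := Nat.odd_iff.1 hodd
      rw [this]
      rfl
    · intro w hw
      rw [Finset.mem_coe, Finset.mem_filter] at hw
      have hmq : minper m w = q := hw.2
      have hper : Per (iw m w) q := hmq ▸ minper_per w
      funext i
      show iw q (blockW q w) i.val = w i
      rw [iw_block w hper]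
      exact iw_fin w i
    · intro b hb
      funext i
      show iw m (periW (m := m) q b) i.val = b i
      rw [iw_periW hdvd]
      exact iw_fin b i
  · intro w hw
    rw [Finset.mem_coe, Finset.mem_filter] at hw
    rw [Finset.mem_coe, Finset.mem_filter, Nat.mem_divisors]
    have hdvd := minper_dvd w
    refine ⟨⟨hdvd, by omega⟩, ?_⟩
    have hper := minper_per w
    haveI : NeZero (minper m w) := ⟨by have := minper_pos w; omega⟩
    have hpf := pw_factor w hper hdvd
    rw [hw.2] at hpf
    rw [Nat.odd_iff]
    by_contra hc
    have h1 : decide (m / minper m w % 2 = 1) = false := by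
      simp only [decide_eq_false_iff_not]
      exact hc
    rw [h1] at hpf
    simp at hpf

end PartB


/-! ### Möbius inversion -/

theorem acard_moebius (n : ℕ) (hn : 0 < n) :
    (Acard n : ℤ) =
      ∑ d ∈ n.divisors.filter (fun d => Odd d),
        (ArithmeticFunction.moebius d : ℤ) * 2 ^ (n / d - 1) := by
  classical
  set a := n.factorization 2 with ha
  set u := n / 2 ^ a with hu
  have hn0 : n ≠ 0 := by omega
  have hne : 2 ^ a * u = n := Nat.ordProj_mul_ordCompl_eq_self n 2
  have hu2 : ¬ 2 ∣ u := Nat.not_dvd_ordCompl Nat.prime_two hn0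
  have hupos : 0 < u := Nat.ordCompl_pos 2 hn0
  have hppos : 0 < 2 ^ a := Nat.pow_pos (n := a) (by omega)
  set f : ℕ → ℤ := fun v => (Acard (2 ^ a * v) : ℤ) with hf
  set g : ℕ → ℤ := fun v => 2 ^ (2 ^ a * v - 1) with hg
  have hS : ∀ x y : ℕ, x ∣ y → y ∈ {v : ℕ | v ∣ u} → x ∈ {v : ℕ | v ∣ u} :=
    fun x y hxy hy => dvd_trans hxy hy
  have hyp : ∀ v > 0, v ∈ {v : ℕ | v ∣ u} → ∑ e ∈ v.divisors, f e = g v := by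
    intro v hv0 hvu
    have hvodd : ¬ 2 ∣ v := fun hh => hu2 (dvd_trans hh hvu)
    set mm := 2 ^ a * v with hmm
    have hmm0 : 0 < mm := Nat.mul_pos hppos hv0
    haveI : NeZero mm := ⟨by omega⟩
    have hps := partB_sum (m := mm)
    have hreind :
        ∑ q ∈ mm.divisors.filter (fun q => Odd (mm / q)), (Acard q : ℤ) =
          ∑ e ∈ v.divisors, f e := by
      apply Finset.sum_nbij' (i := fun q => q / 2 ^ a) (j := fun e => 2 ^ a * e)
      · intro q hq
        rw [Finset.mem_filter, Nat.mem_divisors] at hq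
        obtain ⟨⟨hqd, _⟩, hodd⟩ := hq
        have h2aq : 2 ^ a ∣ q := by
          have hcop : Nat.Coprime (2 ^ a) (mm / q) := by
            apply Nat.Coprime.pow_left
            rw [Nat.Prime.coprime_iff_not_dvd Nat.prime_two]
            rw [Nat.odd_iff] at hodd
            omega
          have : 2 ^ a ∣ q * (mm / q) := by
            rw [Nat.mul_div_cancel' hqd]
            exact Dvd.intro v rfl
          exact hcop.dvd_of_dvd_mul_right this
        rw [Nat.mem_divisors]
        constructor
        · have heq : 2 ^ a * (q / 2 ^ a) = q := Nat.mul_div_cancel' h2aq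
          have : 2 ^ a * (q / 2 ^ a) ∣ 2 ^ a * v := by rw [heq, ← hmm]; exact hqd
          exact (Nat.mul_dvd_mul_iff_left hppos).1 this
        · omega
      · intro e he
        rw [Nat.mem_divisors] at he
        rw [Finset.mem_filter, Nat.mem_divisors]
        refine ⟨⟨Nat.mul_dvd_mul_left _ he.1, by omega⟩, ?_⟩
        rw [hmm, Nat.mul_div_mul_left _ _ hppos]
        rw [Nat.odd_iff]
        have hd : v / e ∣ v := Nat.div_dvd_of_dvd he.1
        have : ¬ 2 ∣ (v / e) := fun hh => hvodd (dvd_trans hh hd)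
        omega
      · intro q hq
        rw [Finset.mem_filter, Nat.mem_divisors] at hq
        obtain ⟨⟨hqd, _⟩, hodd⟩ := hq
        have h2aq : 2 ^ a ∣ q := by
          have hcop : Nat.Coprime (2 ^ a) (mm / q) := by
            apply Nat.Coprime.pow_left
            rw [Nat.Prime.coprime_iff_not_dvd Nat.prime_two]
            rw [Nat.odd_iff] at hodd
            omega
          have : 2 ^ a ∣ q * (mm / q) := by
            rw [Nat.mul_div_cancel' hqd]
            exact Dvd.intro v rfl
          exact hcop.dvd_of_dvd_mul_right this
        exact Nat.mul_div_cancel' h2aq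
      · intro e he
        exact Nat.mul_div_cancel_left _ hppos
      · intro q hq
        rw [hf]
        simp only []
        congr 1
        rw [Finset.mem_filter, Nat.mem_divisors] at hq
        obtain ⟨⟨hqd, _⟩, hodd⟩ := hq
        have h2aq : 2 ^ a ∣ q := by
          have hcop : Nat.Coprime (2 ^ a) (mm / q) := by
            apply Nat.Coprime.pow_left
            rw [Nat.Prime.coprime_iff_not_dvd Nat.prime_two]
            rw [Nat.odd_iff] at hodd
            omega
          have : 2 ^ a ∣ q * (mm / q) := by
            rw [Nat.mul_div_cancel' hqd]
            exact Dvd.intro v rfl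
          exact hcop.dvd_of_dvd_mul_right this
        rw [Nat.mul_div_cancel' h2aq]
    rw [← hreind]
    have hcast : ((2 ^ (mm - 1) : ℕ) : ℤ) =
        ∑ q ∈ mm.divisors.filter (fun q => Odd (mm / q)), (Acard q : ℤ) := by
      rw [hps]
      push_cast
      rfl
    rw [← hcast, hg]
    push_cast
    rfl
  have hinv := (ArithmeticFunction.sum_eq_iff_sum_mul_moebius_eq_on
    {v : ℕ | v ∣ u} hS (f := f) (g := g)).1 hyp u hupos (by exact dvd_rfl)
  have hinv2 : ∑ d ∈ u.divisors, (ArithmeticFunction.moebius d : ℤ) * g (u / d) = f u :=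
    (Nat.sum_divisorsAntidiagonal (M := ℤ)
      (f := fun d e => (ArithmeticFunction.moebius d : ℤ) * g e) (n := u)).symm.trans hinv
  have hfu : f u = (Acard n : ℤ) := by rw [hf]; simp only []; rw [hne]
  rw [← hfu, ← hinv2]
  have hsets : n.divisors.filter (fun d => Odd d) = u.divisors := by
    ext d
    rw [Finset.mem_filter, Nat.mem_divisors, Nat.mem_divisors]
    constructor
    · rintro ⟨⟨hdn, _⟩, hodd⟩
      refine ⟨?_, by omega⟩
      have hcop : Nat.Coprime d (2 ^ a) := by
        apply Nat.Coprime.pow_right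
        rw [Nat.coprime_comm, Nat.Prime.coprime_iff_not_dvd Nat.prime_two]
        rw [Nat.odd_iff] at hodd
        omega
      have : d ∣ 2 ^ a * u := by rw [hne]; exact hdn
      exact hcop.dvd_of_dvd_mul_left this
    · rintro ⟨hdu, _⟩
      have hdodd : ¬ 2 ∣ d := fun hh => hu2 (dvd_trans hh hdu)
      refine ⟨⟨dvd_trans hdu ⟨2 ^ a, by rw [← hne]; ring⟩, hn0⟩, ?_⟩
      rw [Nat.odd_iff]
      omega
  rw [hsets]
  apply Finset.sum_congr rfl
  intro d hd
  rw [Nat.mem_divisors] at hd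
  congr 1
  rw [hg]
  simp only []
  congr 2
  rw [← hne, Nat.mul_div_assoc _ hd.1]

end TU


/-- The number of transitive unimodal permutations of `{1,...,n}` equals
`(1/n) Σ_{d ∣ n, d odd} μ(d) 2^(n/d - 1)`. -/
theorem card_transitive_unimodal (n : ℕ) (hn : 1 ≤ n) :
    (n : ℤ) * ({δ : Equiv.Perm (Fin n) | IsUnimodal δ ∧ IsTransitive δ}.ncard : ℤ) =
      ∑ d ∈ n.divisors.filter (fun d => Odd d),
        (ArithmeticFunction.moebius d : ℤ) * 2 ^ (n / d - 1) := by
  classical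
  haveI : NeZero n := ⟨by omega⟩
  have h1 := TU.partA n
  have h2 := TU.acard_moebius n (by omega)
  have h3 : TU.Acard n = Nat.card {w : Fin n → Bool // TU.pw n w = true ∧ TU.Ap n w} := by
    rw [TU.Acard_eq, Nat.card_eq_fintype_card, Fintype.card_subtype]
  rw [← h2, h3, h1]
  push_cast
  ring
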